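/- For any m×m complex matrices A and B, the function t ↦ tr(exp(A + t•B)) from ℝ to ℂ has derivative tr(exp(A)·B) at t = 0. -/

import Mathlib

open NormedSpace
open scoped Nat

namespace TraceExpAux

attribute [local instance] Matrix.linftyOpNormedRing Matrix.linftyOpNormedAlgebra
  Matrix.linftyOpNormedSpace

variable {m : ℕ}

noncomputable def T (m : ℕ) : Matrix (Fin m) (Fin m) ℂ →L[ℂ] ℂ :=
  LinearMap.toContinuousLinearMap (Matrix.traceLinearMap (Fin m) ℂ ℂ)

theorem T_apply (M : Matrix (Fin m) (Fin m) ℂ) : T m M = M.trace := rfl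

noncomputable instance normCLM (m : ℕ) :
    SeminormedAddCommGroup (Matrix (Fin m) (Fin m) ℂ →L[ℂ] ℂ) := by
  exact ContinuousLinearMap.toSeminormedAddCommGroup

theorem htr (M : Matrix (Fin m) (Fin m) ℂ) : ‖M.trace‖ ≤ ‖T m‖ * ‖M‖ :=
  (T m).le_opNorm M

theorem norm_one_le : ‖(1 : Matrix (Fin m) (Fin m) ℂ)‖ ≤ 1 := by
  rcases eq_or_ne m 0 with h | h
  · subst h
    rw [Subsingleton.elim (1 : Matrix (Fin 0) (Fin 0) ℂ) 0, norm_zero]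
    norm_num
  · have : Nonempty (Fin m) := ⟨⟨0, Nat.pos_of_ne_zero h⟩⟩
    rw [norm_one]

theorem hasDerivAt_pow_aux (A B : Matrix (Fin m) (Fin m) ℂ) (n : ℕ) (t : ℝ) :
    HasDerivAt (fun s : ℝ => (A + s • B) ^ n)
      (∑ i ∈ Finset.range n, (A + t • B) ^ i * B * (A + t • B) ^ (n - 1 - i)) t := by
  induction n with
  | zero =>
    have h0 : HasDerivAt (fun _ : ℝ => (1 : Matrix (Fin m) (Fin m) ℂ)) 0 t :=
      hasDerivAt_const t _
    simpa using h0
  | succ n ih =>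
    have hX : HasDerivAt (fun s : ℝ => A + s • B) B t := by
      have h0 : HasDerivAt (fun s : ℝ => A + s • B) (0 + (1 : ℝ) • B) t :=
        (hasDerivAt_const t A).add ((hasDerivAt_id t).smul_const B)
      simpa using h0
    have h : HasDerivAt (fun s : ℝ => (A + s • B) * (A + s • B) ^ n) _ t := hX.mul ih
    have hfun : (fun s : ℝ => (A + s • B) * (A + s • B) ^ n)
        = fun s : ℝ => (A + s • B) ^ (n + 1) := by
      funext s; rw [pow_succ']
    rw [hfun] at h
    convert h using 1
    rw [Finset.sum_range_succ', pow_zero, one_mul, Finset.mul_sum, add_comm]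
    simp only [Nat.add_sub_cancel, Nat.sub_zero]
    congr 1
    refine Finset.sum_congr rfl fun i hi => ?_
    have he : n - (i + 1) = n - 1 - i := by omega
    rw [he, ← mul_assoc, ← mul_assoc, ← pow_succ']

theorem hasDerivAt_trace_pow (A B : Matrix (Fin m) (Fin m) ℂ) (n : ℕ) (t : ℝ) :
    HasDerivAt (fun s : ℝ => ((A + s • B) ^ n).trace)
      ((n : ℂ) * ((A + t • B) ^ (n - 1) * B).trace) t := by
  have h := (((T m).restrictScalars ℝ).hasFDerivAt).comp_hasDerivAt t (hasDerivAt_pow_aux A B n t)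
  have hval : T m (∑ i ∈ Finset.range n, (A + t • B) ^ i * B * (A + t • B) ^ (n - 1 - i))
      = (n : ℂ) * ((A + t • B) ^ (n - 1) * B).trace := by
    rw [map_sum]
    have : ∀ i ∈ Finset.range n,
        T m ((A + t • B) ^ i * B * (A + t • B) ^ (n - 1 - i))
          = ((A + t • B) ^ (n - 1) * B).trace := by
      intro i hi
      rw [T_apply, Matrix.trace_mul_comm, ← mul_assoc, ← pow_add]
      have hi' := Finset.mem_range.mp hi
      have he : n - 1 - i + i = n - 1 := by omega
      rw [he]
    rw [Finset.sum_congr rfl this, Finset.sum_const, Finset.card_range, nsmul_eq_mul]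
  have h2 : HasDerivAt (fun s : ℝ => T m ((A + s • B) ^ n))
      (T m (∑ i ∈ Finset.range n, (A + t • B) ^ i * B * (A + t • B) ^ (n - 1 - i))) t := h
  rw [hval] at h2
  exact h2

noncomputable def L (m : ℕ) (B : Matrix (Fin m) (Fin m) ℂ) : Matrix (Fin m) (Fin m) ℂ →L[ℂ] ℂ :=
  LinearMap.toContinuousLinearMap ((Matrix.traceLinearMap (Fin m) ℂ ℂ).comp (LinearMap.mulRight ℂ B))

theorem L_apply (B M : Matrix (Fin m) (Fin m) ℂ) : L m B M = (M * B).trace := rfl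

noncomputable def g (A B : Matrix (Fin m) (Fin m) ℂ) (n : ℕ) (t : ℝ) : ℂ :=
  ((n ! : ℂ))⁻¹ • ((A + t • B) ^ n).trace

noncomputable def g' (A B : Matrix (Fin m) (Fin m) ℂ) (n : ℕ) (t : ℝ) : ℂ :=
  ((n ! : ℂ))⁻¹ • ((n : ℂ) * ((A + t • B) ^ (n - 1) * B).trace)

end TraceExpAux

attribute [local instance] Matrix.linftyOpNormedRing Matrix.linftyOpNormedAlgebra
  Matrix.linftyOpNormedSpace

open TraceExpAux in
/-- For any `m × m` complex matrices `A` and `B`, the function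
`t ↦ tr (exp (A + t • B))` from `ℝ` to `ℂ` has derivative `tr (exp A · B)` at `t = 0`. -/
theorem hasDerivAt_trace_exp {m : ℕ} (A B : Matrix (Fin m) (Fin m) ℂ) :
    HasDerivAt (fun t : ℝ => (exp (A + t • B)).trace)
      ((exp A * B).trace) 0 := by
  classical
  set R : ℝ := max (‖A‖ + ‖B‖) 1 with hR
  have hR1 : (1 : ℝ) ≤ R := le_max_right _ _
  have hR0 : (0 : ℝ) ≤ R := zero_le_one.trans hR1
  set u : ℕ → ℝ := fun n => ‖T m‖ * ‖B‖ * ((n : ℝ) * R ^ (n - 1) / n !) with hu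
  have hu_sum : Summable u := by
    refine Summable.mul_left _ ?_
    rw [← summable_nat_add_iff 1]
    refine (Real.summable_pow_div_factorial R).congr fun n => ?_
    rw [Nat.add_sub_cancel, Nat.factorial_succ]
    push_cast
    rw [mul_div_mul_left _ _ (by positivity : ((n : ℝ) + 1) ≠ 0)]
  have hderiv : ∀ (n : ℕ) (y : ℝ), y ∈ Metric.ball (0 : ℝ) 1 →
      HasDerivAt (g A B n) (g' A B n y) y := fun n y _ =>
    (hasDerivAt_trace_pow A B n y).const_smul ((n ! : ℂ))⁻¹
  have key : ∀ (n : ℕ) (y : ℝ), y ∈ Metric.ball (0 : ℝ) 1 → ‖g' A B n y‖ ≤ u n := by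
    intro n y hy
    have hyle : |y| ≤ 1 := by
      have := Metric.mem_ball.mp hy
      rw [Real.dist_eq, sub_zero] at this
      exact this.le
    have hXle : ‖A + y • B‖ ≤ R := by
      refine (norm_add_le _ _).trans (le_trans ?_ (le_max_left _ _))
      have h1 : ‖y • B‖ ≤ ‖B‖ := by
        rw [norm_smul]
        simpa using mul_le_of_le_one_left (norm_nonneg B) (by simpa using hyle)
      linarith
    have hpow : ∀ k : ℕ, ‖(A + y • B) ^ k‖ ≤ R ^ k := by
      intro k
      induction k with
      | zero => rw [pow_zero, pow_zero]; exact TraceExpAux.norm_one_le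
      | succ k ihk =>
        calc ‖(A + y • B) ^ (k + 1)‖ = ‖(A + y • B) * (A + y • B) ^ k‖ := by rw [pow_succ']
          _ ≤ ‖A + y • B‖ * ‖(A + y • B) ^ k‖ := norm_mul_le _ _
          _ ≤ R * R ^ k := mul_le_mul hXle ihk (norm_nonneg _) hR0
          _ = R ^ (k + 1) := (pow_succ' R k).symm
    have h1 : ‖g' A B n y‖
        = ((n ! : ℝ))⁻¹ * ((n : ℝ) * ‖((A + y • B) ^ (n - 1) * B).trace‖) := by
      simp [g', norm_smul, norm_mul]
    have h2 : ‖((A + y • B) ^ (n - 1) * B).trace‖ ≤ ‖T m‖ * (R ^ (n - 1) * ‖B‖) := by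
      refine (htr _).trans ?_
      have h3 := (norm_mul_le ((A + y • B) ^ (n - 1)) B).trans
        (mul_le_mul_of_nonneg_right (hpow (n - 1)) (norm_nonneg B))
      exact mul_le_mul_of_nonneg_left h3 (norm_nonneg _)
    rw [h1, hu]
    calc ((n ! : ℝ))⁻¹ * ((n : ℝ) * ‖((A + y • B) ^ (n - 1) * B).trace‖)
        ≤ ((n ! : ℝ))⁻¹ * ((n : ℝ) * (‖T m‖ * (R ^ (n - 1) * ‖B‖))) := by
          gcongr
      _ = ‖T m‖ * ‖B‖ * ((n : ℝ) * R ^ (n - 1) / n !) := by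
          field_simp
  have hsum0 : Summable fun n => g A B n 0 := by
    refine ((expSeries_summable' (𝕂 := ℂ) A).mapL (T m)).congr fun n => ?_
    simp [g, T_apply, map_smul]
  have main := hasDerivAt_tsum_of_isPreconnected hu_sum Metric.isOpen_ball
    (convex_ball (0 : ℝ) 1).isPreconnected hderiv key (Metric.mem_ball_self one_pos)
    hsum0 (Metric.mem_ball_self one_pos)
  have hfun : (fun t : ℝ => (exp (A + t • B)).trace) = fun z => ∑' n, g A B n z := by
    funext z
    rw [exp_eq_tsum (𝕂 := ℂ), ← T_apply, (T m).map_tsum (expSeries_summable' (𝕂 := ℂ) (A + z • B))]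
    exact tsum_congr fun n => by simp [g, T_apply, map_smul]
  have hval : (∑' n, g' A B n 0) = (exp A * B).trace := by
    have hsO : Summable fun n => g' A B n 0 :=
      Summable.of_norm_bounded hu_sum fun n => key n 0 (Metric.mem_ball_self one_pos)
    rw [hsO.tsum_eq_zero_add]
    have h0 : g' A B 0 0 = 0 := by simp [g']
    rw [h0, zero_add]
    have hr : (exp A * B).trace = ∑' n : ℕ, ((n ! : ℂ))⁻¹ • ((A ^ n) * B).trace := by
      simp only [exp_eq_tsum (𝕂 := ℂ)]
      rw [← TraceExpAux.L_apply, (L m B).map_tsum (expSeries_summable' (𝕂 := ℂ) A)]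
      exact tsum_congr fun n => by rw [map_smul]; rfl
    rw [hr]
    refine tsum_congr fun n => ?_
    have hn1 : ((n : ℂ) + 1) ≠ 0 := Nat.cast_add_one_ne_zero n
    have hn2 : ((n ! : ℂ)) ≠ 0 := Nat.cast_ne_zero.mpr (Nat.factorial_ne_zero n)
    simp only [g', Nat.add_sub_cancel, zero_smul, add_zero, smul_eq_mul, Nat.factorial_succ]
    push_cast
    field_simp
  rw [hfun, ← hval]
  exact main
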